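/- Greedy bucket construction: processing a sorted multiset of m ≤ 3t+1 values where each value has multiplicity at most t, closing a bucket as soon as adding the next distinct value would exceed t elements, yields buckets each of size at most t such that any two consecutive buckets jointly contain at least t+1 elements (except possibly a degenerate last empty bucket), and hence at most 5 buckets. -/

import Mathlib

/-- One step of the greedy bucket construction: the current (open) bucket is at
the head of the accumulator; a run of equal values is merged into it if this
keeps the bucket within `t` elements, and otherwise starts a new bucket. -/
def greedyStep {V : Type*} (t : ℕ) (buckets : List (List V)) (run : List V) :
    List (List V) :=
  match buckets with
  | [] => [run]
  | b :: rest => if b.length + run.length ≤ t then (b ++ run) :: rest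
                 else run :: b :: rest

/-- Greedy bucket construction: split the sorted list into maximal runs of
equal values and greedily pack runs into buckets of at most `t` elements,
closing a bucket as soon as adding the next run would exceed `t` elements. -/
def greedyBuckets {V : Type*} [DecidableEq V] (t : ℕ) (L : List V) :
    List (List V) :=
  ((L.splitBy (· == ·)).foldl (greedyStep t) []).reverse

namespace GreedyAux

variable {V : Type*}

/-- first-run length -/
def frl [DecidableEq V] (b : List V) : ℕ :=
  (b.takeWhile (fun w => decide (b.head? = some w))).length

theorem frl_self [DecidableEq V] (r : List V) (h : ∀ x ∈ r, r.head? = some x) :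
    frl r = r.length := by
  unfold frl
  rw [List.takeWhile_eq_self_iff.mpr]
  intro x hx
  simp [h x hx]

theorem frl_le [DecidableEq V] (b : List V) : frl b ≤ b.length :=
  (List.takeWhile_sublist _).length_le

theorem frl_append [DecidableEq V] (b r : List V) (hb : b ≠ [])
    (h : ∀ x ∈ r, ¬ (b.head? = some x)) : frl (b ++ r) = frl b := by
  unfold frl
  have hh : (b ++ r).head? = b.head? := by
    cases b with
    | nil => exact absurd rfl hb
    | cons a l => simp
  simp only [hh]
  rw [List.takeWhile_append]
  split
  · rename_i hlen
    have hnil : (r.takeWhile (fun w => decide (b.head? = some w))) = [] := by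
      rw [List.takeWhile_eq_nil_iff]
      intro hl
      simp only [decide_eq_true_eq]
      exact h _ (List.get_mem ..)
    rw [hnil]
    simp [hlen]
  · rfl

theorem const_of_chain' [DecidableEq V] :
    ∀ (r : List V), r.IsChain (fun x y => x == y) → ∀ x ∈ r, r.head? = some x := by
  intro r
  induction r with
  | nil => simp
  | cons a l ih =>
    intro h x hx
    rw [List.isChain_cons] at h
    simp only [List.head?_cons, Option.some.injEq]
    rw [List.mem_cons] at hx
    rcases hx with rfl | hx
    · rfl
    · have hxl := ih h.2 x hx
      cases l with
      | nil => cases hx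
      | cons b l' =>
        have hab : a = b := by simpa using h.1 b (by simp)
        have hbx : b = x := by simpa using hxl
        exact hab.trans hbx

theorem chain'_imp_mem {α : Type*} {R S : α → α → Prop} :
    ∀ {l : List α}, (∀ a ∈ l, ∀ b ∈ l, R a b → S a b) → l.IsChain R → l.IsChain S := by
  intro l
  induction l with
  | nil => intro _ _; exact List.isChain_nil
  | cons a l ih =>
    intro h hc
    rw [List.isChain_cons] at hc ⊢
    refine ⟨fun y hy => h a (.head _) y ?_ (hc.1 y hy), ih ?_ hc.2⟩
    · cases l with
      | nil => cases hy
      | cons b l' =>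
        simp only [List.head?_cons, Option.mem_def, Option.some.injEq] at hy
        subst hy
        exact .tail _ (.head _)
    · intro x hx y hy' hr
      exact h x (.tail _ hx) y (.tail _ hy') hr

theorem pw_lt [LinearOrder V] :
    ∀ (runs : List (List V)),
    (∀ r ∈ runs, r ≠ []) →
    runs.IsChain (fun r r' => ∀ x ∈ r, ∀ y ∈ r', x ≠ y) →
    runs.Pairwise (fun r r' => ∀ x ∈ r, ∀ y ∈ r', x ≤ y) →
    runs.Pairwise (fun r r' => ∀ x ∈ r, ∀ y ∈ r', x < y) := by
  intro runs
  induction runs with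
  | nil => intro _ _ _; exact .nil
  | cons r rest ih =>
    intro hne hch hpw
    rw [List.pairwise_cons] at hpw ⊢
    refine ⟨?_, ih (fun a ha => hne a (.tail _ ha)) hch.tail hpw.2⟩
    intro r' hr' x hx y hy
    cases rest with
    | nil => cases hr'
    | cons r2 rest' =>
      have hadj : ∀ x ∈ r, ∀ y ∈ r2, x ≠ y := (List.isChain_cons_cons.mp hch).1
      rw [List.mem_cons] at hr'
      rcases hr' with rfl | hr'
      · exact lt_of_le_of_ne (hpw.1 _ (.head _) x hx y hy) (hadj x hx y hy)
      · obtain ⟨z, hz⟩ := List.exists_mem_of_ne_nil r2 (hne r2 (by simp))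
        have h1 : x < z := lt_of_le_of_ne (hpw.1 r2 (.head _) x hx z hz) (hadj x hx z hz)
        have h2 : z ≤ y := by
          have hpw2 := hpw.2
          rw [List.pairwise_cons] at hpw2
          exact hpw2.1 r' hr' z hz y hy
        exact lt_of_lt_of_le h1 h2

theorem fold_inv [DecidableEq V] (t : ℕ) :
    ∀ (rs : List (List V)) (acc : List (List V)),
    (∀ r ∈ rs, r ≠ []) →
    (∀ r ∈ rs, r.length ≤ t) →
    (∀ r ∈ rs, ∀ x ∈ r, r.head? = some x) →
    rs.Pairwise (fun r r' => ∀ x ∈ r, ∀ y ∈ r', x ≠ y) →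
    (∀ b ∈ acc, b ≠ [] ∧ b.length ≤ t) →
    acc.IsChain (fun nb ob => t < ob.length + frl nb) →
    (∀ b ∈ acc, ∀ x ∈ b, ∀ r ∈ rs, ∀ y ∈ r, x ≠ y) →
    (∀ b ∈ rs.foldl (greedyStep t) acc, b ≠ [] ∧ b.length ≤ t) ∧
      (rs.foldl (greedyStep t) acc).IsChain (fun nb ob => t < ob.length + frl nb) := by
  intro rs
  induction rs with
  | nil =>
    intro acc _ _ _ _ h1 h2 _
    exact ⟨h1, h2⟩
  | cons r rs ih =>
    intro acc hne hlen hconst hpw hb hch hcross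
    rw [List.foldl_cons]
    rw [List.pairwise_cons] at hpw
    have hrne := hne r (.head _)
    have hrlen := hlen r (.head _)
    have hrconst := hconst r (.head _)
    have hne' : ∀ a ∈ rs, a ≠ [] := fun a ha => hne a (.tail _ ha)
    have hlen' : ∀ a ∈ rs, a.length ≤ t := fun a ha => hlen a (.tail _ ha)
    have hconst' : ∀ a ∈ rs, ∀ x ∈ a, a.head? = some x := fun a ha => hconst a (.tail _ ha)
    cases acc with
    | nil =>
      apply ih _ hne' hlen' hconst' hpw.2
      · intro c hc
        simp only [greedyStep, List.mem_singleton] at hc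
        subst hc
        exact ⟨hrne, hrlen⟩
      · simp [greedyStep]
      · intro c hc x hx r' hr' y hy
        simp only [greedyStep, List.mem_singleton] at hc
        subst hc
        exact hpw.1 r' hr' x hx y hy
    | cons b rest =>
      by_cases hle : b.length + r.length ≤ t
      · have hstep : greedyStep t (b :: rest) r = (b ++ r) :: rest := by
          simp [greedyStep, hle]
        rw [hstep]
        have hbne := (hb b (.head _)).1
        apply ih _ hne' hlen' hconst' hpw.2
        · intro c hc
          rw [List.mem_cons] at hc
          rcases hc with rfl | hc
          · exact ⟨by simp [hbne], by simpa using hle⟩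
          · exact hb c (.tail _ hc)
        · have hfrl : frl (b ++ r) = frl b := by
            apply frl_append _ _ hbne
            intro x hx
            rw [List.head?_eq_head hbne]
            simp only [Option.some.injEq]
            exact hcross b (.head _) _ (List.head_mem hbne) r (.head _) x hx
          rw [List.isChain_cons] at hch ⊢
          exact ⟨fun ob hob => hfrl ▸ hch.1 ob hob, hch.2⟩
        · intro c hc x hx r' hr' y hy
          rw [List.mem_cons] at hc
          rcases hc with rfl | hc
          · rcases List.mem_append.mp hx with hx | hx
            · exact hcross b (.head _) x hx r' (.tail _ hr') y hy
            · exact hpw.1 r' hr' x hx y hy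
          · exact hcross c (.tail _ hc) x hx r' (.tail _ hr') y hy
      · have hstep : greedyStep t (b :: rest) r = r :: b :: rest := by
          simp [greedyStep, hle]
        rw [hstep]
        apply ih _ hne' hlen' hconst' hpw.2
        · intro c hc
          rw [List.mem_cons] at hc
          rcases hc with rfl | hc
          · exact ⟨hrne, hrlen⟩
          · exact hb c hc
        · rw [List.isChain_cons_cons]
          refine ⟨?_, hch⟩
          rw [frl_self r hrconst]
          omega
        · intro c hc x hx r' hr' y hy
          rw [List.mem_cons] at hc
          rcases hc with rfl | hc
          · exact hpw.1 r' hr' x hx y hy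
          · exact hcross c hc x hx r' (.tail _ hr') y hy

theorem fold_len [DecidableEq V] (t : ℕ) :
    ∀ (rs acc : List (List V)),
    ((rs.foldl (greedyStep t) acc).map List.length).sum
      = (acc.map List.length).sum + (rs.map List.length).sum := by
  intro rs
  induction rs with
  | nil => simp
  | cons r rs ih =>
    intro acc
    rw [List.foldl_cons, ih]
    have hstep : ((greedyStep t acc r).map List.length).sum
        = (acc.map List.length).sum + r.length := by
      cases acc with
      | nil => simp [greedyStep]
      | cons b rest =>
        by_cases h : b.length + r.length ≤ t <;> simp [greedyStep, h] <;> omega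
    rw [hstep]
    simp
    omega

theorem atmost5 (t : ℕ) (bl : List ℕ)
    (hsum : bl.sum ≤ 3 * t + 1)
    (hpair : ∀ i, i + 1 < bl.length → t + 1 ≤ bl.getD i 0 + bl.getD (i + 1) 0) :
    bl.length ≤ 5 := by
  by_contra hcon
  push_neg at hcon
  rcases bl with _ | ⟨a0, _ | ⟨a1, _ | ⟨a2, _ | ⟨a3, _ | ⟨a4, _ | ⟨a5, rest⟩⟩⟩⟩⟩⟩ <;>
    simp only [List.length_nil, List.length_cons] at hcon <;> try omega
  have h0 := hpair 0 (by simp)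
  have h2 := hpair 2 (by simp)
  have h4 := hpair 4 (by simp)
  simp only [List.getD_cons_zero, List.getD_cons_succ, List.sum_cons] at h0 h2 h4 hsum
  omega

end GreedyAux

open GreedyAux in
theorem greedyBuckets_spec {V : Type*} [LinearOrder V] (t : ℕ) (L : List V)
    (hsorted : L.Pairwise (· ≤ ·)) (hlen : L.length ≤ 3 * t + 1)
    (hcount : ∀ v : V, L.count v ≤ t) :
    (∀ b ∈ greedyBuckets t L, b.length ≤ t) ∧
    (∀ i, i + 1 < (greedyBuckets t L).length →
      t < ((greedyBuckets t L).getD i []).length +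
        (((greedyBuckets t L).getD (i + 1) []).takeWhile
          (fun w => decide (((greedyBuckets t L).getD (i + 1) []).head? = some w))).length) ∧
    (∀ i, i + 1 < (greedyBuckets t L).length →
      t + 1 ≤ ((greedyBuckets t L).getD i []).length +
        ((greedyBuckets t L).getD (i + 1) []).length) ∧
    (greedyBuckets t L).length ≤ 5 := by
  classical
  set runs := L.splitBy (· == ·) with hruns
  have hflat : runs.flatten = L := List.flatten_splitBy _ _
  have hne : ∀ r ∈ runs, r ≠ [] := fun r hr => List.ne_nil_of_mem_splitBy hr
  have hconst : ∀ r ∈ runs, ∀ x ∈ r, r.head? = some x :=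
    fun r hr => const_of_chain' r (List.isChain_of_mem_splitBy hr)
  have hrlen : ∀ r ∈ runs, r.length ≤ t := by
    intro r hr
    obtain ⟨v, hv⟩ := List.exists_mem_of_ne_nil r (hne r hr)
    have hcv : List.count v r = r.length := by
      rw [List.count_eq_length]
      intro b hb
      have h1 := hconst r hr v hv
      have h2 := hconst r hr b hb
      rw [h1] at h2
      exact Option.some_inj.mp h2
    calc r.length = List.count v r := hcv.symm
      _ ≤ List.count v L := by
          rw [← hflat, List.count_flatten]
          exact List.single_le_sum (fun x _ => Nat.zero_le x) _
            (List.mem_map_of_mem hr)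
      _ ≤ t := hcount v
  have hpwle : runs.Pairwise (fun r r' => ∀ x ∈ r, ∀ y ∈ r', x ≤ y) := by
    have hs : runs.flatten.Pairwise (· ≤ ·) := hflat ▸ hsorted
    exact (List.pairwise_flatten.mp hs).2
  have hchne : runs.IsChain (fun r r' => ∀ x ∈ r, ∀ y ∈ r', x ≠ y) := by
    have hc := List.isChain_getLast_head_splitBy (fun x1 x2 => x1 == x2) L
    rw [← hruns] at hc
    refine chain'_imp_mem ?_ hc
    rintro a ha b hb ⟨hna, hnb, hfalse⟩ x hx y hy
    have hx' : x = a.getLast hna := by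
      have h1 := hconst a ha x hx
      have h2 := hconst a ha _ (List.getLast_mem hna)
      rw [h1] at h2
      exact (Option.some_inj.mp h2)
    have hy' : y = b.head hnb := by
      have h1 := hconst b hb y hy
      have h2 := hconst b hb _ (List.head_mem hnb)
      rw [h1] at h2
      exact (Option.some_inj.mp h2)
    rw [hx', hy']
    exact ne_of_beq_false hfalse
  have hpwne : runs.Pairwise (fun r r' => ∀ x ∈ r, ∀ y ∈ r', x ≠ y) :=
    (pw_lt runs hne hchne hpwle).imp (fun h x hx y hy => (h x hx y hy).ne)
  obtain ⟨hba, hchain⟩ := fold_inv t runs [] hne hrlen hconst hpwne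
    (by simp) (by simp) (by simp)
  have hgb : greedyBuckets t L = (runs.foldl (greedyStep t) []).reverse := rfl
  have hchainR : (greedyBuckets t L).IsChain (fun ob nb => t < ob.length + frl nb) := by
    rw [hgb, List.isChain_reverse]
    exact hchain
  -- indexed forms
  have hidx : ∀ i, i + 1 < (greedyBuckets t L).length →
      t < ((greedyBuckets t L).getD i []).length +
        frl ((greedyBuckets t L).getD (i + 1) []) := by
    intro i hi
    have h := List.isChain_iff_getElem.mp hchainR i (by omega)
    rwa [← List.getD_eq_getElem _ [] (by omega : i < (greedyBuckets t L).length),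
      ← List.getD_eq_getElem _ [] hi] at h
  have hpair : ∀ i, i + 1 < (greedyBuckets t L).length →
      t + 1 ≤ ((greedyBuckets t L).getD i []).length +
        ((greedyBuckets t L).getD (i + 1) []).length := by
    intro i hi
    have h := hidx i hi
    have h2 := frl_le ((greedyBuckets t L).getD (i + 1) [])
    omega
  refine ⟨?_, ?_, hpair, ?_⟩
  · intro b hb
    rw [hgb, List.mem_reverse] at hb
    exact (hba b hb).2
  · exact hidx
  · -- at most 5
    have hsum : ((greedyBuckets t L).map List.length).sum = L.length := by
      rw [hgb, List.map_reverse, List.sum_reverse, fold_len t runs []]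
      simp [← List.length_flatten, hflat]
    have h5 := atmost5 t ((greedyBuckets t L).map List.length)
      (by rw [hsum]; omega)
      (by
        intro i hi
        rw [List.length_map] at hi
        have h := hpair i hi
        have e1 : ((greedyBuckets t L).map List.length).getD i 0
            = ((greedyBuckets t L).getD i []).length := by
          rw [List.getD_eq_getElem _ 0 (by simp; omega), List.getElem_map,
            List.getD_eq_getElem _ [] (by omega)]
        have e2 : ((greedyBuckets t L).map List.length).getD (i+1) 0
            = ((greedyBuckets t L).getD (i+1) []).length := by
          rw [List.getD_eq_getElem _ 0 (by simp; omega),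
            List.getD_eq_getElem _ [] (by omega : i + 1 < (greedyBuckets t L).length),
            List.getElem_map]
        rw [e1, e2]
        exact h)
    simpa using h5
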